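/- Let d = 2 and μ₂ the measure r·dr on (0,∞). Define R f(r) = χ_{[0,1]}(r) · sup_{t∈[1,2], t≥2r} (1/r) ∫_{t−r}^{t+r} f(z) dz. Then R is bounded from L¹(μ₂) to L^q(μ₂) for every 1 ≤ q < 2, and R is bounded from L¹(μ₂) to weak-L²(μ₂). -/

import Mathlib

open Set MeasureTheory
open scoped ENNReal NNReal

noncomputable section

/-- The measure `μ₂` on `(0,∞)` with density `r`. -/
def mu2 : Measure ℝ :=
  (volume.restrict (Ioi (0 : ℝ))).withDensity fun r => ENNReal.ofReal r

/-- The `L^p(μ)` norm of an `ℝ≥0∞`-valued function (with `p = ∞` meaning the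
essential supremum). -/
def lpNormE (μ : Measure ℝ) (p : ℝ≥0∞) (g : ℝ → ℝ≥0∞) : ℝ≥0∞ :=
  if p = ∞ then essSup g μ else (∫⁻ r, g r ^ p.toReal ∂μ) ^ (1 / p.toReal)

/-- `R f(r) = χ_{[0,1]}(r) · sup_{t∈[1,2], t≥2r} (1/r) ∫_{t−r}^{t+r} f(z) dz`. -/
def Rop (f : ℝ → ℝ≥0∞) (r : ℝ) : ℝ≥0∞ :=
  if 0 ≤ r ∧ r ≤ 1 then
    ⨆ t ∈ {t : ℝ | t ∈ Icc (1 : ℝ) 2 ∧ 2 * r ≤ t},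
      (ENNReal.ofReal r)⁻¹ * ∫⁻ z in Icc (t - r) (t + r), f z
  else 0

lemma lintegral_mu2 (f : ℝ → ℝ≥0∞) :
    ∫⁻ r, f r ∂mu2 = ∫⁻ r in Ioi (0:ℝ), ENNReal.ofReal r * f r := by
  rw [mu2, lintegral_withDensity_eq_lintegral_mul_non_measurable _
    ENNReal.measurable_ofReal (Filter.Eventually.of_forall fun x => ENNReal.ofReal_lt_top)]
  rfl

lemma lpNormE_one (f : ℝ → ℝ≥0∞) : lpNormE mu2 1 f = ∫⁻ r, f r ∂mu2 := by
  simp [lpNormE]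

lemma Rop_key (f : ℝ → ℝ≥0∞) {r : ℝ} :
    Rop f r ≤ (ENNReal.ofReal r)⁻¹ * (2 * ∫⁻ z, f z ∂mu2) := by
  rw [Rop]
  split_ifs with h
  · refine iSup₂_le fun t ht => ?_
    obtain ⟨⟨ht1, ht2⟩, htr⟩ := ht
    refine mul_le_mul_right ?_ _
    have hhalf : (1:ℝ)/2 ≤ t - r := by
      rcases le_total r (1/2) with h' | h' <;> linarith
    calc ∫⁻ z in Icc (t-r) (t+r), f z
        ≤ ∫⁻ z in Icc (t-r) (t+r), 2 * (ENNReal.ofReal z * f z) := by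
          refine lintegral_mono_ae ?_
          rw [ae_restrict_iff' measurableSet_Icc]
          filter_upwards with z hz
          have hz2 : (1:ℝ) ≤ 2 * z := by have := hz.1; linarith
          calc f z = 1 * f z := (one_mul _).symm
            _ ≤ (2 * ENNReal.ofReal z) * f z := by
                refine mul_le_mul_left ?_ _
                rw [show (2:ℝ≥0∞) = ENNReal.ofReal 2 by simp,
                  ← ENNReal.ofReal_mul (by norm_num)]
                exact ENNReal.one_le_ofReal.mpr hz2
            _ = 2 * (ENNReal.ofReal z * f z) := by rw [mul_assoc]
      _ = 2 * ∫⁻ z in Icc (t-r) (t+r), ENNReal.ofReal z * f z :=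
          lintegral_const_mul' 2 _ (by simp)
      _ ≤ 2 * ∫⁻ z in Ioi (0:ℝ), ENNReal.ofReal z * f z := by
          refine mul_le_mul_right (lintegral_mono_set fun z hz => ?_) _
          have := hz.1; simp only [mem_Ioi]; linarith
      _ = 2 * ∫⁻ z, f z ∂mu2 := by rw [lintegral_mu2]
  · exact zero_le

lemma Rop_zero (f : ℝ → ℝ≥0∞) {r : ℝ} (h : ¬(0 ≤ r ∧ r ≤ 1)) : Rop f r = 0 := by
  rw [Rop, if_neg h]

lemma mu2_Icc_le (b : ℝ) (hb : 0 ≤ b) :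
    mu2 (Icc 0 b) ≤ ENNReal.ofReal b * ENNReal.ofReal b := by
  rw [mu2, withDensity_apply _ measurableSet_Icc, Measure.restrict_restrict measurableSet_Icc,
    show Icc (0:ℝ) b ∩ Ioi 0 = Ioc 0 b by
      ext x
      simp only [mem_inter_iff, mem_Icc, mem_Ioi, mem_Ioc]
      constructor
      · rintro ⟨⟨_, h2⟩, h3⟩; exact ⟨h3, h2⟩
      · rintro ⟨h1, h2⟩; exact ⟨⟨h1.le, h2⟩, h1⟩]
  calc ∫⁻ r in Ioc (0:ℝ) b, ENNReal.ofReal r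
      ≤ ∫⁻ _ in Ioc (0:ℝ) b, ENNReal.ofReal b := by
        refine lintegral_mono_ae ?_
        rw [ae_restrict_iff' measurableSet_Ioc]
        filter_upwards with x hx
        exact ENNReal.ofReal_le_ofReal hx.2
    _ = ENNReal.ofReal b * volume (Ioc (0:ℝ) b) := by
        rw [lintegral_const, Measure.restrict_apply_univ]
    _ = ENNReal.ofReal b * ENNReal.ofReal b := by rw [Real.volume_Ioc, sub_zero]

theorem Rop_bounds :
    (∀ q : ℝ≥0∞, 1 ≤ q → q < 2 →
      ∃ C : ℝ≥0, ∀ f : ℝ → ℝ≥0∞, Measurable f →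
        lpNormE mu2 q (Rop f) ≤ C * lpNormE mu2 1 f) ∧
    (∃ C : ℝ≥0, ∀ f : ℝ → ℝ≥0∞, Measurable f → ∀ l : ℝ≥0∞, 0 < l →
      l * (mu2 {r | l < Rop f r}) ^ (1 / 2 : ℝ) ≤ C * lpNormE mu2 1 f) := by
  constructor
  · intro q hq1 hq2
    have hqtop : q ≠ ∞ := hq2.ne_top
    set q' := q.toReal with hq'
    have hq'1 : 1 ≤ q' := by
      rw [hq', ← ENNReal.toReal_one]
      exact ENNReal.toReal_mono hqtop hq1
    have hq'2 : q' < 2 := by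
      have : q.toReal < (2:ℝ≥0∞).toReal :=
        (ENNReal.toReal_lt_toReal hqtop (by norm_num)).mpr hq2
      simpa using this
    have hq'0 : 0 < q' := by linarith
    have hint : IntegrableOn (fun x : ℝ => x ^ (1 - q')) (Ioc 0 1) volume :=
      (intervalIntegral.intervalIntegrable_rpow' (a := (0:ℝ)) (b := 1)
        (r := 1 - q') (by linarith)).1
    set J := ∫⁻ r in Ioc (0:ℝ) 1, ENNReal.ofReal (r ^ (1 - q')) with hJ
    have hJeq : ENNReal.ofReal (∫ r in Ioc (0:ℝ) 1, r ^ (1 - q')) = J :=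
      ofReal_integral_eq_lintegral_ofReal hint
        ((ae_restrict_iff' measurableSet_Ioc).mpr
          (Filter.Eventually.of_forall fun x hx => Real.rpow_nonneg hx.1.le _))
    have hJtop : J ≠ ∞ := by rw [← hJeq]; exact ENNReal.ofReal_ne_top
    set K := 2 * (J + 1) ^ (1/q') with hK
    have hJ1top : J + 1 ≠ ∞ := by finiteness
    have hKtop : K ≠ ∞ :=
      ENNReal.mul_ne_top (by norm_num) (ENNReal.rpow_ne_top_of_nonneg (by positivity) hJ1top)
    have hK0 : K ≠ 0 :=
      mul_ne_zero (by norm_num) (ENNReal.rpow_pos (zero_lt_one.trans_le le_add_self) hJ1top).ne'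
    refine ⟨K.toNNReal, fun f hf => ?_⟩
    rw [lpNormE_one]
    set A := ∫⁻ r, f r ∂mu2 with hA
    have hcoe : (K.toNNReal : ℝ≥0∞) = K := ENNReal.coe_toNNReal hKtop
    rcases eq_or_ne A ∞ with hAtop | hAtop
    · rw [hAtop, hcoe, ENNReal.mul_top hK0]; exact le_top
    have h2A : (2 * A) ^ q' ≠ ∞ :=
      ENNReal.rpow_ne_top_of_nonneg hq'0.le (by finiteness)
    have hnorm : lpNormE mu2 q (Rop f) = (∫⁻ r, Rop f r ^ q' ∂mu2) ^ (1/q') := by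
      rw [lpNormE, if_neg hqtop]
    rw [hnorm, hcoe]
    have hTle : (∫⁻ r, Rop f r ^ q' ∂mu2) ≤ (2 * A) ^ q' * J := by
      rw [lintegral_mu2]
      calc ∫⁻ r in Ioi (0:ℝ), ENNReal.ofReal r * Rop f r ^ q'
          ≤ ∫⁻ r in Ioi (0:ℝ),
              (Ioc (0:ℝ) 1).indicator
                (fun r => (2 * A) ^ q' * ENNReal.ofReal (r ^ (1 - q'))) r := by
            refine lintegral_mono_ae ?_
            rw [ae_restrict_iff' measurableSet_Ioi]
            filter_upwards with r hr
            rw [mem_Ioi] at hr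
            by_cases h1 : r ≤ 1
            · rw [indicator_of_mem (show r ∈ Ioc (0:ℝ) 1 from ⟨hr, h1⟩)]
              have hkey := Rop_key f (r := r)
              have e1 : ((ENNReal.ofReal r)⁻¹) ^ q' = ENNReal.ofReal (r ^ (-q')) := by
                rw [← ENNReal.ofReal_inv_of_pos hr, ENNReal.ofReal_rpow_of_pos (inv_pos.mpr hr),
                  Real.inv_rpow hr.le, ← Real.rpow_neg hr.le]
              have e2 : ENNReal.ofReal r * ENNReal.ofReal (r ^ (-q'))
                  = ENNReal.ofReal (r ^ (1 - q')) := by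
                rw [← ENNReal.ofReal_mul hr.le]
                congr 1
                rw [show r * r ^ (-q') = r ^ (1:ℝ) * r ^ (-q') by rw [Real.rpow_one],
                  ← Real.rpow_add hr]
                ring_nf
              calc ENNReal.ofReal r * Rop f r ^ q'
                  ≤ ENNReal.ofReal r * ((ENNReal.ofReal r)⁻¹ * (2 * A)) ^ q' :=
                    mul_le_mul_right (ENNReal.rpow_le_rpow hkey hq'0.le) _
                _ = (2 * A) ^ q' * ENNReal.ofReal (r ^ (1 - q')) := by
                    rw [ENNReal.mul_rpow_of_nonneg _ _ hq'0.le, e1, ← e2]; ring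
            · rw [Rop_zero f (by intro h; exact h1 h.2), ENNReal.zero_rpow_of_pos hq'0,
                mul_zero]
              exact zero_le
        _ = (2 * A) ^ q' * J := by
            rw [lintegral_indicator measurableSet_Ioc,
              Measure.restrict_restrict measurableSet_Ioc,
              show Ioc (0:ℝ) 1 ∩ Ioi 0 = Ioc 0 1 from
                inter_eq_left.mpr fun x hx => hx.1,
              lintegral_const_mul' _ _ h2A]
    calc (∫⁻ r, Rop f r ^ q' ∂mu2) ^ (1/q')
        ≤ ((2 * A) ^ q' * (J + 1)) ^ (1/q') := by
          refine ENNReal.rpow_le_rpow (hTle.trans ?_) (by positivity)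
          exact mul_le_mul_right (le_add_right le_rfl) _
      _ = (2 * A) * (J + 1) ^ (1/q') := by
          rw [ENNReal.mul_rpow_of_nonneg _ _ (by positivity), ← ENNReal.rpow_mul,
            mul_one_div_cancel hq'0.ne', ENNReal.rpow_one]
      _ = K * A := by rw [hK]; ring
  · -- weak type (1,2) bound
    refine ⟨2, fun f hf l hl => ?_⟩
    rw [lpNormE_one]
    set A := ∫⁻ r, f r ∂mu2 with hA
    rcases eq_or_ne A ∞ with hAtop | hAtop
    · rw [hAtop]; simp
    rcases eq_or_ne l ∞ with hltop | hltop
    · have : {r : ℝ | l < Rop f r} = ∅ := by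
        ext r
        simp only [mem_setOf_eq, mem_empty_iff_false, iff_false, not_lt, hltop]
        exact le_top
      rw [this]
      simp [ENNReal.zero_rpow_of_pos, (by norm_num : (0:ℝ) < 1/2)]
    · set b := (2 * A / l).toReal with hb
      have hbnn : 0 ≤ b := ENNReal.toReal_nonneg
      have hdivtop : 2 * A / l ≠ ∞ :=
        (ENNReal.div_lt_top (by finiteness) hl.ne').ne
      have hsub : {r : ℝ | l < Rop f r} ⊆ Icc 0 b := by
        intro r hr
        simp only [mem_setOf_eq] at hr
        by_cases h01 : 0 ≤ r ∧ r ≤ 1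
        · refine ⟨h01.1, ?_⟩
          rcases eq_or_lt_of_le h01.1 with h0 | h0
          · rw [← h0]; exact hbnn
          have hkey := Rop_key f (r := r)
          have hlt : l < (ENNReal.ofReal r)⁻¹ * (2 * A) := lt_of_lt_of_le hr hkey
          have hne0 : ENNReal.ofReal r ≠ 0 := by
            simp [ENNReal.ofReal_eq_zero, not_le, h0]
          have hnetop : ENNReal.ofReal r ≠ ∞ := ENNReal.ofReal_ne_top
          have hmul : l * ENNReal.ofReal r ≤ 2 * A := by
            calc l * ENNReal.ofReal r
                ≤ ((ENNReal.ofReal r)⁻¹ * (2 * A)) * ENNReal.ofReal r :=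
                  mul_le_mul_left hlt.le _
              _ = (2 * A) * ((ENNReal.ofReal r)⁻¹ * ENNReal.ofReal r) := by ring
              _ = 2 * A := by rw [ENNReal.inv_mul_cancel hne0 hnetop, mul_one]
          have hle : ENNReal.ofReal r ≤ 2 * A / l :=
            (ENNReal.le_div_iff_mul_le (Or.inl hl.ne') (Or.inl hltop)).mpr
              (by rw [mul_comm]; exact hmul)
          have : ENNReal.ofReal r ≤ ENNReal.ofReal b := by
            rwa [hb, ENNReal.ofReal_toReal hdivtop]
          exact (ENNReal.ofReal_le_ofReal_iff hbnn).mp this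
        · exact absurd (Rop_zero f h01 ▸ hr) (by simp)
      calc l * (mu2 {r : ℝ | l < Rop f r}) ^ (1/2 : ℝ)
          ≤ l * (ENNReal.ofReal b * ENNReal.ofReal b) ^ (1/2 : ℝ) := by
            refine mul_le_mul_right (ENNReal.rpow_le_rpow ?_ (by norm_num)) _
            exact le_trans (measure_mono hsub) (mu2_Icc_le b hbnn)
        _ = l * ENNReal.ofReal b := by
            rw [← sq, ← ENNReal.rpow_natCast (ENNReal.ofReal b) 2, ← ENNReal.rpow_mul]
            norm_num
        _ = l * (2 * A / l) := by rw [hb, ENNReal.ofReal_toReal hdivtop]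
        _ = 2 * A := ENNReal.mul_div_cancel hl.ne' hltop
        _ = (2:ℝ≥0) * A := by norm_num
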